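/- Let z ∈ ℂ with z ∉ {0,1}, fix w ∈ ℂ with w² = z, and suppose m₁, m₂, m₃, m₄ ∈ ℂ satisfy m₃ = (1 − (z−1)m₂)/(z^{-1} − (m₁+m₂) + (z−1)m₁m₂) (with nonzero denominator), m₄ = (1 − (z−1)m₁)/(z^{-1} − (m₁+m₂) + (z−1)m₁m₂), and set h := w^{-1} m₃/(1 + (1−z)m₂). Then the 2×2 matrix π := [[m₃, h],[h, m₄]] is invertible with inverse π^{-1} = (1/(z−1)) [[1 − (z−1)m₁, −w^{-1}],[−w^{-1}, 1 − (z−1)m₂]]. -/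

import Mathlib

theorem stmt7 (z w : ℂ) (hz0 : z ≠ 0) (hz1 : z ≠ 1) (hw : w ^ 2 = z)
    (m₁ m₂ m₃ m₄ : ℂ)
    (hden : z⁻¹ - (m₁ + m₂) + (z - 1) * m₁ * m₂ ≠ 0)
    (hm₃ : m₃ = (1 - (z - 1) * m₂) / (z⁻¹ - (m₁ + m₂) + (z - 1) * m₁ * m₂))
    (hm₄ : m₄ = (1 - (z - 1) * m₁) / (z⁻¹ - (m₁ + m₂) + (z - 1) * m₁ * m₂))
    (hden2 : 1 + (1 - z) * m₂ ≠ 0)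
    (h : ℂ) (hh : h = w⁻¹ * m₃ / (1 + (1 - z) * m₂))
    (π : Matrix (Fin 2) (Fin 2) ℂ) (hπ : π = !![m₃, h; h, m₄]) :
    IsUnit π.det ∧
      π⁻¹ = (z - 1)⁻¹ • !![1 - (z - 1) * m₁, -w⁻¹; -w⁻¹, 1 - (z - 1) * m₂] := by
  have hw0 : w ≠ 0 := by
    intro hw0; apply hz0; rw [← hw, hw0]; ring
  have hz1' : z - 1 ≠ 0 := sub_ne_zero.mpr hz1
  obtain ⟨E, hE⟩ : ∃ E : ℂ, E = 1 - z * (m₁ + m₂) + z * (z - 1) * m₁ * m₂ := ⟨_, rfl⟩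
  have hDE : z⁻¹ - (m₁ + m₂) + (z - 1) * m₁ * m₂ = E / z := by
    rw [hE]; field_simp
  rw [hDE] at hden hm₃ hm₄
  have hEne : E ≠ 0 := by
    intro h0; exact hden (by rw [h0, zero_div])
  have hh' : h = w⁻¹ / (E / z) := by
    rw [hh, hm₃]
    have h2 : (1 : ℂ) - (z - 1) * m₂ = 1 + (1 - z) * m₂ := by ring
    rw [h2]
    field_simp
  have k00 : m₃ * ((z - 1)⁻¹ * (1 - (z - 1) * m₁)) + h * ((z - 1)⁻¹ * -w⁻¹) = 1 := by
    rw [hm₃, hh']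
    subst hw
    field_simp
    rw [hE]
    ring
  have k01 : m₃ * ((z - 1)⁻¹ * -w⁻¹) + h * ((z - 1)⁻¹ * (1 - (z - 1) * m₂)) = 0 := by
    rw [hm₃, hh']
    field_simp
    ring
  have k10 : h * ((z - 1)⁻¹ * (1 - (z - 1) * m₁)) + m₄ * ((z - 1)⁻¹ * -w⁻¹) = 0 := by
    rw [hm₄, hh']
    field_simp
    ring
  have k11 : h * ((z - 1)⁻¹ * -w⁻¹) + m₄ * ((z - 1)⁻¹ * (1 - (z - 1) * m₂)) = 1 := by
    rw [hm₄, hh']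
    subst hw
    field_simp
    rw [hE]
    ring
  have hmul : π * ((z - 1)⁻¹ • !![1 - (z - 1) * m₁, -w⁻¹; -w⁻¹, 1 - (z - 1) * m₂]) = 1 := by
    subst hπ
    ext i j
    fin_cases i <;> fin_cases j <;>
      simp only [Matrix.mul_apply, Matrix.smul_apply, Fin.sum_univ_two, smul_eq_mul,
        Matrix.cons_val', Matrix.cons_val_zero, Matrix.cons_val_one, Matrix.head_cons,
        Matrix.head_fin_const, Matrix.empty_val', Matrix.cons_val_fin_one, Matrix.of_apply,
        Fin.isValue, Fin.mk_zero, Fin.mk_one, Matrix.one_apply_eq, Matrix.one_apply_ne,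
        ne_eq, Fin.zero_eq_one_iff, Fin.one_eq_zero_iff, OfNat.ofNat_ne_one,
        not_false_eq_true, Matrix.one_apply]
    · exact k00
    · simpa using k01
    · simpa using k10
    · exact k11
  exact ⟨Matrix.isUnit_det_of_right_inverse hmul, Matrix.inv_eq_right_inv hmul⟩
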